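/- Verification theorem for the classical (positive) multi-marginal Schrödinger problem: let Q be an array with strictly positive entries and suppose there exist strictly positive scalars a^{(ℓ)}_j (for each ℓ ∈ {1,…,n} and j ∈ I_ℓ) such that the array P defined by P_k = Q_k · Π_{ℓ=1}^n a^{(ℓ)}_{k_ℓ} satisfies all marginal constraints Σ_{k : k_ℓ = j} P_k = p^{(ℓ)}_j. Then for every nonnegative array P' satisfying the same marginal constraints, S(P', Q) ≥ S(P, Q), with equality if and only if P' = P. -/

import Mathlib

open scoped BigOperators

private lemma key_ineq (x y : ℝ) (hx : 0 ≤ x) (hy : 0 < y) :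
    x - y ≤ x * Real.log (x / y) ∧ (x * Real.log (x / y) = x - y ↔ x = y) := by
  rcases hx.eq_or_lt with h0 | hxpos
  · subst h0
    constructor
    · simpa using hy.le
    · constructor
      · intro h; simp at h; linarith
      · intro h; exact absurd h (by linarith)
  · rcases eq_or_ne x y with he | hne
    · subst he; simp [div_self hxpos.ne']
    · have h1 : Real.log (y / x) < y / x - 1 :=
        Real.log_lt_sub_one_of_pos (div_pos hy hxpos) (by
          intro h
          exact hne ((div_eq_one_iff_eq hxpos.ne').mp h).symm)
      have h2 : Real.log (x / y) = - Real.log (y / x) := by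
        rw [← Real.log_inv, inv_div]
      have h3 : x - y < x * Real.log (x / y) := by
        rw [h2]
        have hx' : x * (y / x - 1) = y - x := by field_simp
        nlinarith [mul_lt_mul_of_pos_left h1 hxpos]
      exact ⟨h3.le, ⟨fun h => by linarith, fun h => absurd h hne⟩⟩

/-- Verification theorem for the classical (positive) multi-marginal
Schrödinger problem: if `P_k = Q_k · Π_ℓ a^{(ℓ)}_{k_ℓ}` with strictly positive scalings
`a^{(ℓ)}_j` satisfies the marginal constraints, then `P` minimizes `S(·, Q)` over all
nonnegative arrays with the same marginals, and it is the unique minimizer. -/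
theorem classical_schrodinger_verification
    (n : ℕ) (hn : 1 ≤ n) (I : Fin n → Type)
    [∀ ℓ, Fintype (I ℓ)] [∀ ℓ, Nonempty (I ℓ)] [∀ ℓ, DecidableEq (I ℓ)]
    (Q : (∀ ℓ, I ℓ) → ℝ) (hQ : ∀ k, 0 < Q k)
    (p : ∀ ℓ, I ℓ → ℝ) (hp : ∀ ℓ j, 0 < p ℓ j)
    (a : ∀ ℓ, I ℓ → ℝ) (ha : ∀ ℓ j, 0 < a ℓ j)
    (P : (∀ ℓ, I ℓ) → ℝ) (hPdef : ∀ k, P k = Q k * ∏ ℓ, a ℓ (k ℓ))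
    (hPmarg : ∀ (ℓ : Fin n) (j : I ℓ),
      ∑ k : ∀ ℓ, I ℓ, (if k ℓ = j then P k else 0) = p ℓ j) :
    ∀ P' : (∀ ℓ, I ℓ) → ℝ, (∀ k, 0 ≤ P' k) →
      (∀ (ℓ : Fin n) (j : I ℓ),
        ∑ k : ∀ ℓ, I ℓ, (if k ℓ = j then P' k else 0) = p ℓ j) →
      (∑ k : ∀ ℓ, I ℓ, P k * (Real.log (P k / Q k) - 1) ≤
          ∑ k : ∀ ℓ, I ℓ, P' k * (Real.log (P' k / Q k) - 1) ∧
        (∑ k : ∀ ℓ, I ℓ, P' k * (Real.log (P' k / Q k) - 1) =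
            ∑ k : ∀ ℓ, I ℓ, P k * (Real.log (P k / Q k) - 1) ↔ P' = P)) := by
  intro P' hP' hP'marg
  have ℓ₀ : Fin n := ⟨0, hn⟩
  have hPpos : ∀ k, 0 < P k := fun k => by
    rw [hPdef]; exact mul_pos (hQ k) (Finset.prod_pos fun ℓ _ => ha ℓ (k ℓ))
  -- decomposition of a total sum along the ℓ-th marginal
  have decomp : ∀ (R : (∀ ℓ, I ℓ) → ℝ) (ℓ : Fin n),
      ∑ k, R k = ∑ j : I ℓ, ∑ k : ∀ ℓ, I ℓ, (if k ℓ = j then R k else 0) := by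
    intro R ℓ
    rw [Finset.sum_comm]
    refine Finset.sum_congr rfl fun k _ => ?_
    simp [Finset.sum_ite_eq]
  -- weighted version
  have weighted : ∀ (R : (∀ ℓ, I ℓ) → ℝ) (ℓ : Fin n) (g : I ℓ → ℝ),
      ∑ k, R k * g (k ℓ)
        = ∑ j : I ℓ, g j * ∑ k : ∀ ℓ, I ℓ, (if k ℓ = j then R k else 0) := by
    intro R ℓ g
    simp only [Finset.mul_sum]
    rw [Finset.sum_comm]
    refine Finset.sum_congr rfl fun k _ => ?_
    simp [mul_ite, Finset.sum_ite_eq, mul_comm]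
  have hmass : ∑ k, P' k = ∑ k, P k := by
    rw [decomp P' ℓ₀, decomp P ℓ₀]
    exact Finset.sum_congr rfl fun j _ => by rw [hP'marg, hPmarg]
  have logPQ : ∀ k, Real.log (P k / Q k) = ∑ ℓ, Real.log (a ℓ (k ℓ)) := by
    intro k
    rw [hPdef k, mul_div_cancel_left₀ _ (hQ k).ne',
      Real.log_prod (fun ℓ _ => (ha ℓ (k ℓ)).ne')]
  have T1 : ∑ k, (P' k - P k) * Real.log (P k / Q k) = 0 := by
    have step : ∀ k : (∀ ℓ, I ℓ), (P' k - P k) * Real.log (P k / Q k)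
        = ∑ ℓ, (P' k - P k) * Real.log (a ℓ (k ℓ)) := by
      intro k; rw [logPQ, Finset.mul_sum]
    rw [Finset.sum_congr rfl fun k _ => step k, Finset.sum_comm]
    refine Finset.sum_eq_zero fun ℓ _ => ?_
    rw [weighted (fun k => P' k - P k) ℓ (fun j => Real.log (a ℓ j))]
    refine Finset.sum_eq_zero fun j _ => ?_
    have hsub : ∑ k : ∀ ℓ, I ℓ, (if k ℓ = j then P' k - P k else 0)
        = (∑ k : ∀ ℓ, I ℓ, (if k ℓ = j then P' k else 0))
          - ∑ k : ∀ ℓ, I ℓ, (if k ℓ = j then P k else 0) := by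
      rw [← Finset.sum_sub_distrib]
      exact Finset.sum_congr rfl fun k _ => by split <;> simp
    rw [hsub, hP'marg, hPmarg, sub_self, mul_zero]
  have hsplit : ∑ k, (P' k - P k) * Real.log (P k / Q k)
      = ∑ k, P' k * Real.log (P k / Q k) - ∑ k, P k * Real.log (P k / Q k) := by
    rw [← Finset.sum_sub_distrib]
    exact Finset.sum_congr rfl fun k _ => sub_mul _ _ _
  have hcross : ∑ k, P' k * Real.log (P k / Q k)
      = ∑ k, P k * Real.log (P k / Q k) := by
    rw [hsplit] at T1; linarith
  have pointwise : ∀ k, P' k * (Real.log (P' k / Q k) - 1)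
      = P' k * Real.log (P' k / P k) + P' k * Real.log (P k / Q k) - P' k := by
    intro k
    rcases (hP' k).eq_or_lt with h0 | hpos
    · simp [← h0]
    · have h1 : Real.log (P' k / Q k)
          = Real.log (P' k / P k) + Real.log (P k / Q k) := by
        rw [Real.log_div hpos.ne' (hQ k).ne', Real.log_div hpos.ne' (hPpos k).ne',
          Real.log_div (hPpos k).ne' (hQ k).ne']
        ring
      rw [h1]; ring
  have Smain : ∑ k, P' k * (Real.log (P' k / Q k) - 1)
      - ∑ k, P k * (Real.log (P k / Q k) - 1)
      = ∑ k, P' k * Real.log (P' k / P k) := by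
    have e1 : ∑ k, P' k * (Real.log (P' k / Q k) - 1)
        = (∑ k, P' k * Real.log (P' k / P k)
          + ∑ k, P' k * Real.log (P k / Q k)) - ∑ k, P' k := by
      rw [Finset.sum_congr rfl fun k _ => pointwise k,
        Finset.sum_sub_distrib, Finset.sum_add_distrib]
    have e2 : ∑ k, P k * (Real.log (P k / Q k) - 1)
        = ∑ k, P k * Real.log (P k / Q k) - ∑ k, P k := by
      rw [← Finset.sum_sub_distrib]
      exact Finset.sum_congr rfl fun k _ => by ring
    rw [e1, e2, hcross, hmass]; ring
  have hle : ∀ k ∈ (Finset.univ : Finset (∀ ℓ, I ℓ)),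
      P' k - P k ≤ P' k * Real.log (P' k / P k) :=
    fun k _ => (key_ineq _ _ (hP' k) (hPpos k)).1
  have hsum0 : ∑ k, (P' k - P k) = 0 := by
    rw [Finset.sum_sub_distrib, hmass, sub_self]
  have hD : 0 ≤ ∑ k, P' k * Real.log (P' k / P k) := by
    have h := Finset.sum_le_sum hle
    rw [hsum0] at h; exact h
  refine ⟨by linarith, ?_, ?_⟩
  · intro heq
    have hDz : ∑ k, P' k * Real.log (P' k / P k) = 0 := by linarith
    have hall := (Finset.sum_eq_sum_iff_of_le hle).mp (by rw [hsum0, hDz])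
    funext k
    exact (key_ineq _ _ (hP' k) (hPpos k)).2.mp (hall k (Finset.mem_univ k)).symm
  · intro h; subst h; rfl
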